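/- Define φ ⇒ ψ := (φ → ψ) ∧ (¬ψ → ¬φ) and φ ⇔ ψ := (φ ⇒ ψ) ∧ (ψ ⇒ φ) in FDE+cmi. Then for all FDE values x, y: x ⇔ y is designated if and only if x = y. -/

import Mathlib

/-- Truth values of FDE: T, B (both), N (neither), F. T and B are designated. -/
inductive FDE : Type | T | B | N | F
deriving DecidableEq

instance : Fintype FDE := ⟨{FDE.T, FDE.B, FDE.N, FDE.F}, fun x => by cases x <;> simp⟩

namespace FDE

/-- Negation: swaps T and F, fixes B and N. -/
def neg : FDE → FDE | T => F | F => T | B => B | N => N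

/-- Lattice meet (conjunction): F bottom, T top, B and N incomparable. -/
def meet : FDE → FDE → FDE
  | T, y => y | x, T => x
  | F, _ => F | _, F => F
  | B, B => B | N, N => N
  | B, N => F | N, B => F

/-- Lattice join (disjunction). -/
def join : FDE → FDE → FDE
  | F, y => y | x, F => x
  | T, _ => T | _, T => T
  | B, B => B | N, N => N
  | B, N => T | N, B => T

/-- The cmi conditional: value of the consequent if the antecedent is designated
(T or B), and T otherwise. -/
def cmi : FDE → FDE → FDE
  | T, y => y | B, y => y
  | N, _ => T | F, _ => T

/-- Designated values of FDE are T and B. -/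
def designated (x : FDE) : Prop := x = T ∨ x = B

end FDE

/-- The contraposed conditional: x ⇒ y := (x → y) ∧ (¬y → ¬x). -/
def FDE.darr (x y : FDE) : FDE := FDE.meet (FDE.cmi x y) (FDE.cmi (FDE.neg y) (FDE.neg x))

/-- The strong biconditional: x ⇔ y := (x ⇒ y) ∧ (y ⇒ x). -/
def FDE.biff (x y : FDE) : FDE := FDE.meet (FDE.darr x y) (FDE.darr y x)

instance : DecidablePred FDE.designated := fun x => decidable_of_iff _ (Iff.rfl (a := x = FDE.T ∨ x = FDE.B))

/-- x ⇔ y is designated if and only if x = y. -/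
theorem fde_biff_designated_iff_eq (x y : FDE) :
    FDE.designated (FDE.biff x y) ↔ x = y := by revert x y; decide
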